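/- arXiv:1712.02847 — 4 statements merged into one kernel-verified Lean document; each statement's English description precedes it below -/
import Mathlib

section
/- Fix a transmission energy threshold Ē, a battery capacity B_cap, an initial battery level B0 ≤ B_cap, and a harvest sequence H : ℕ → ℕ. For every admissible usage sequence ε and every time t ∈ ℕ, the number of transmission attempts of ε through time t is at most that of the greedy usage sequence: N^A_ε(t) ≤ N^A_g(t). -/
/-- Battery trajectory induced by a usage sequence `ε`:
`B_ε(0) = B0`, `B_ε(t+1) = min(Bcap, max(0, B_ε(t) + H(t) - ε(t)))`
(truncated subtraction on `ℕ` realizes the `max(0, ·)`). -/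
def batt (Bcap B0 : ℕ) (H ε : ℕ → ℕ) : ℕ → ℕ
  | 0 => B0
  | t + 1 => min Bcap (batt Bcap B0 H ε t + H t - ε t)

/-- A usage sequence is admissible if it never uses more energy than is available. -/
def Admissible (Bcap B0 : ℕ) (H ε : ℕ → ℕ) : Prop :=
  ∀ t, ε t ≤ batt Bcap B0 H ε t + H t

/-- Battery trajectory of the greedy usage sequence. -/
def greedyBatt (Ebar Bcap B0 : ℕ) (H : ℕ → ℕ) : ℕ → ℕ
  | 0 => B0
  | t + 1 =>
    min Bcap (greedyBatt Ebar Bcap B0 H t + H t -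
      (if Ebar ≤ greedyBatt Ebar Bcap B0 H t + H t then Ebar else 0))

/-- The greedy usage sequence: use exactly `Ebar` units of energy whenever possible. -/
def greedyUse (Ebar Bcap B0 : ℕ) (H : ℕ → ℕ) (t : ℕ) : ℕ :=
  if Ebar ≤ greedyBatt Ebar Bcap B0 H t + H t then Ebar else 0

/-- Number of transmission attempts of the usage sequence `ε` through time `t`,
i.e. `#{τ ≤ t : ε(τ) ≥ Ebar}`. -/
def attempts (Ebar : ℕ) (ε : ℕ → ℕ) (t : ℕ) : ℕ :=
  ((Finset.range (t + 1)).filter fun τ => Ebar ≤ ε τ).card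

private lemma min_add_le_min_add {C X Y a b : ℕ} (h1 : X + a ≤ Y + b) (h2 : a ≤ b) :
    min C X + a ≤ min C Y + b := by
  rw [← min_add_add_right, ← min_add_add_right]
  exact min_le_min (Nat.add_le_add_left h2 C) h1

private lemma cnt_succ (Ebar : ℕ) (f : ℕ → ℕ) (n : ℕ) :
    ((Finset.range (n + 1)).filter fun τ => Ebar ≤ f τ).card =
      ((Finset.range n).filter fun τ => Ebar ≤ f τ).card + if Ebar ≤ f n then 1 else 0 := by
  rw [Finset.range_add_one, Finset.filter_insert]
  split
  · rw [Finset.card_insert_of_notMem (by simp)]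
  · simp

/-- The greedy usage sequence dominates every admissible usage sequence in the number
of transmission attempts, at every time. -/
theorem greedy_dominates_attempts (Ebar Bcap B0 : ℕ) (hB0 : B0 ≤ Bcap)
    (H ε : ℕ → ℕ) (hadm : Admissible Bcap B0 H ε) (t : ℕ) :
    attempts Ebar ε t ≤ attempts Ebar (greedyUse Ebar Bcap B0 H) t := by
  have key : ∀ n,
      ((Finset.range n).filter fun τ => Ebar ≤ ε τ).card ≤
        ((Finset.range n).filter fun τ => Ebar ≤ greedyUse Ebar Bcap B0 H τ).card ∧
      batt Bcap B0 H ε n + Ebar * ((Finset.range n).filter fun τ => Ebar ≤ ε τ).card ≤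
        greedyBatt Ebar Bcap B0 H n +
          Ebar * ((Finset.range n).filter fun τ => Ebar ≤ greedyUse Ebar Bcap B0 H τ).card := by
    intro n
    induction n with
    | zero => simp [batt, greedyBatt]
    | succ n ih =>
      obtain ⟨ihc, ihb⟩ := ih
      set ce := ((Finset.range n).filter fun τ => Ebar ≤ ε τ).card with hce
      set cg := ((Finset.range n).filter fun τ => Ebar ≤ greedyUse Ebar Bcap B0 H τ).card with hcg
      set b := batt Bcap B0 H ε n with hb
      set g := greedyBatt Ebar Bcap B0 H n with hg
      have hbatt : batt Bcap B0 H ε (n + 1) = min Bcap (b + H n - ε n) := rfl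
      have hgbatt : greedyBatt Ebar Bcap B0 H (n + 1) =
          min Bcap (g + H n - (if Ebar ≤ g + H n then Ebar else 0)) := rfl
      have hguse : greedyUse Ebar Bcap B0 H n = if Ebar ≤ g + H n then Ebar else 0 := rfl
      rw [cnt_succ, cnt_succ, ← hce, ← hcg, hbatt, hgbatt, hguse]
      have hadmn : ε n ≤ b + H n := hadm n
      have hAG : Ebar * ce ≤ Ebar * cg := Nat.mul_le_mul_left _ ihc
      have hm1 : Ebar * (ce + 1) = Ebar * ce + Ebar := by ring
      have hm2 : Ebar * (cg + 1) = Ebar * cg + Ebar := by ring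
      by_cases hG : Ebar ≤ g + H n
      · rw [if_pos hG, if_pos (le_refl Ebar)]
        by_cases hE : Ebar ≤ ε n
        · rw [if_pos hE]
          simp only [Nat.add_zero, Nat.mul_add, Nat.mul_one]
          exact ⟨by omega, min_add_le_min_add (by omega) (by omega)⟩
        · rw [if_neg hE]
          simp only [Nat.add_zero, Nat.mul_add, Nat.mul_one]
          exact ⟨by omega, min_add_le_min_add (by omega) (by omega)⟩
      · have hEpos : 0 < Ebar := by omega
        rw [if_neg hG, if_neg (by omega : ¬ Ebar ≤ (0 : ℕ))]
        by_cases hE : Ebar ≤ ε n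
        · rw [if_pos hE]
          have hlt : ce < cg := by
            rcases lt_or_eq_of_le ihc with h | h
            · exact h
            · exfalso
              have heq : Ebar * ce = Ebar * cg := by rw [h]
              omega
          have hstep : Ebar * ce + Ebar ≤ Ebar * cg := by
            have := Nat.mul_le_mul_left Ebar (by omega : ce + 1 ≤ cg)
            omega
          simp only [Nat.add_zero, Nat.mul_add, Nat.mul_one]
          exact ⟨by omega, min_add_le_min_add (by omega) (by omega)⟩
        · rw [if_neg hE]
          simp only [Nat.add_zero, Nat.mul_add, Nat.mul_one]
          exact ⟨by omega, min_add_le_min_add (by omega) (by omega)⟩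
  exact (key (t + 1)).1
end

section
/- (Pathwise dominance of the greedy policy.) Fix a transmission energy threshold Ē, a battery capacity B_cap, an initial battery level B0 ≤ B_cap, a harvest sequence H : ℕ → ℕ, and a channel success indicator sequence g : ℕ → {0,1}. For every admissible usage sequence ε and every time t ∈ ℕ, the number of successful loop closures of ε through time t is at most that of the greedy usage sequence: N^S_ε(t) ≤ N^S_g(t). -/
/-- Number of successful loop closures of the usage sequence `ε` through time `t`,
given a channel success indicator sequence `g`: `N^S_ε(t) = Σ_{ℓ < N^A_ε(t)} g(ℓ)`. -/
def successes (Ebar : ℕ) (g : ℕ → ℕ) (ε : ℕ → ℕ) (t : ℕ) : ℕ :=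
  ∑ ℓ ∈ Finset.range (attempts Ebar ε t), g ℓ

/-- Auxiliary: number of attempts strictly before time `t`. -/
def natt (Ebar : ℕ) (ε : ℕ → ℕ) (t : ℕ) : ℕ :=
  ((Finset.range t).filter fun τ => Ebar ≤ ε τ).card

lemma natt_succ (Ebar : ℕ) (ε : ℕ → ℕ) (t : ℕ) :
    natt Ebar ε (t + 1) = natt Ebar ε t + (if Ebar ≤ ε t then 1 else 0) := by
  unfold natt
  rw [Finset.range_add_one, Finset.filter_insert]
  split
  · rw [Finset.card_insert_of_notMem (by simp)]
  · simp

lemma greedy_inv (Ebar Bcap B0 : ℕ) (H ε : ℕ → ℕ)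
    (hadm : Admissible Bcap B0 H ε) (t : ℕ) :
    natt Ebar ε t ≤ natt Ebar (greedyUse Ebar Bcap B0 H) t ∧
      batt Bcap B0 H ε t ≤ greedyBatt Ebar Bcap B0 H t +
        Ebar * (natt Ebar (greedyUse Ebar Bcap B0 H) t - natt Ebar ε t) := by
  induction t with
  | zero => simp [natt, batt, greedyBatt]
  | succ t ih =>
    obtain ⟨hN, hB⟩ := ih
    have hadm' := hadm t
    set b := batt Bcap B0 H ε t with hb
    set c := greedyBatt Ebar Bcap B0 H t with hc
    set Nε := natt Ebar ε t with hNε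
    set Ng := natt Ebar (greedyUse Ebar Bcap B0 H) t with hNg
    have hbatt : batt Bcap B0 H ε (t + 1) = min Bcap (b + H t - ε t) := rfl
    have hgb : greedyBatt Ebar Bcap B0 H (t + 1) =
        min Bcap (c + H t - (if Ebar ≤ c + H t then Ebar else 0)) := rfl
    have hgu : greedyUse Ebar Bcap B0 H t = if Ebar ≤ c + H t then Ebar else 0 := rfl
    rw [natt_succ, natt_succ, hbatt, hgb, hgu, ← hNε, ← hNg]
    by_cases hc1 : Ebar ≤ c + H t
    · simp only [hc1, if_pos, le_refl, if_true]
      by_cases he : Ebar ≤ ε t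
      · -- both attempt
        simp only [he, if_pos]
        constructor
        · omega
        · have h1 : Ebar * (Ng + 1 - (Nε + 1)) = Ebar * (Ng - Nε) := by
            congr 1; omega
          rw [h1]
          omega
      · -- greedy attempts, ε idle
        simp only [he, if_neg, not_false_iff]
        constructor
        · omega
        · have h1 : Ebar * (Ng + 1 - (Nε + 0)) = Ebar * (Ng - Nε) + Ebar := by
            rw [← Nat.mul_succ]; congr 1; omega
          rw [h1]
          omega
    · simp only [hc1, if_neg, not_false_iff]
      have hcEbar : c + H t < Ebar := by omega
      have hE0 : ¬ Ebar ≤ 0 := by omega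
      simp only [hE0, if_false]
      by_cases he : Ebar ≤ ε t
      · -- greedy idle, ε attempts
        simp only [he, if_pos]
        have hD : Nε < Ng := by
          by_contra hcon
          have : Ng - Nε = 0 := by omega
          rw [this, Nat.mul_zero] at hB
          omega
        constructor
        · omega
        · have h1 : Ebar * (Ng + 0 - (Nε + 1)) + Ebar = Ebar * (Ng - Nε) := by
            rw [← Nat.mul_succ]; congr 1; omega
          omega
      · -- both idle
        simp only [he, if_neg, not_false_iff]
        constructor
        · omega
        · simp only [Nat.add_zero]
          omega

lemma attempts_le (Ebar Bcap B0 : ℕ) (H ε : ℕ → ℕ)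
    (hadm : Admissible Bcap B0 H ε) (t : ℕ) :
    attempts Ebar ε t ≤ attempts Ebar (greedyUse Ebar Bcap B0 H) t :=
  (greedy_inv Ebar Bcap B0 H ε hadm (t + 1)).1

/-- Pathwise dominance of the greedy policy: the greedy usage sequence dominates
every admissible usage sequence in the number of successful loop closures,
at every time, for every channel success indicator sequence `g : ℕ → {0,1}`. -/
theorem greedy_dominates_successes (Ebar Bcap B0 : ℕ) (hB0 : B0 ≤ Bcap)
    (H : ℕ → ℕ) (g : ℕ → ℕ) (hg : ∀ ℓ, g ℓ = 0 ∨ g ℓ = 1)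
    (ε : ℕ → ℕ) (hadm : Admissible Bcap B0 H ε) (t : ℕ) :
    successes Ebar g ε t ≤ successes Ebar g (greedyUse Ebar Bcap B0 H) t := by
  apply Finset.sum_le_sum_of_subset
  exact Finset.range_subset_range.mpr (attempts_le Ebar Bcap B0 H ε hadm t)
end

section
/- Fix a transmission energy threshold Ē, a battery capacity B_cap, an initial battery level B0 ≤ B_cap, and a harvest sequence H : ℕ → ℕ. For every admissible usage sequence ε and every time t ∈ ℕ, the battery trajectories of ε and of the greedy usage sequence satisfy B_ε(t+1) + Ē · N^A_ε(t) ≤ B_g(t+1) + Ē · N^A_g(t). -/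
/-- Attempt count over `{τ < t}` (so `attempts Ebar ε t = cnt Ebar ε (t+1)`). -/
def cnt (Ebar : ℕ) (ε : ℕ → ℕ) (t : ℕ) : ℕ :=
  ((Finset.range t).filter fun τ => Ebar ≤ ε τ).card

lemma cnt_succ_s2 (Ebar : ℕ) (ε : ℕ → ℕ) (t : ℕ) :
    cnt Ebar ε (t + 1) = cnt Ebar ε t + (if Ebar ≤ ε t then 1 else 0) := by
  unfold cnt
  rw [Finset.range_add_one, Finset.filter_insert]
  split_ifs with h
  · rw [Finset.card_insert_of_notMem (by simp)]
  · simp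

/-- One-step exchange lemma. -/
lemma step_lemma (Ebar Bcap h b g eps n m : ℕ) (hb : b ≤ Bcap) (hg : g ≤ Bcap)
    (hadm : eps ≤ b + h) (hinv : b + Ebar * n ≤ g + Ebar * m) (hcnt : n ≤ m) :
    (min Bcap (b + h - eps) + Ebar * (n + (if Ebar ≤ eps then 1 else 0)) ≤
      min Bcap (g + h - (if Ebar ≤ g + h then Ebar else 0)) +
        Ebar * (m + (if Ebar ≤ g + h then 1 else 0))) ∧
    n + (if Ebar ≤ eps then 1 else 0) ≤ m + (if Ebar ≤ g + h then 1 else 0) := by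
  have e3 : Ebar * n ≤ Ebar * m := Nat.mul_le_mul_left _ hcnt
  split_ifs with h1 h2 h2
  · -- ε attempts, greedy attempts
    simp only [Nat.mul_add, Nat.mul_one]
    set x := Ebar * n with hx
    set y := Ebar * m with hy
    omega
  · -- ε attempts, greedy doesn't: then b > g so n < m
    have hbg : g < b := by omega
    have hnm : n < m := by
      have : Ebar * n < Ebar * m := by omega
      exact Nat.lt_of_mul_lt_mul_left this
    have e4 : Ebar * n + Ebar ≤ Ebar * m := by
      calc Ebar * n + Ebar = Ebar * (n + 1) := by ring
        _ ≤ Ebar * m := Nat.mul_le_mul_left _ hnm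
    simp only [Nat.mul_add, Nat.mul_one, Nat.add_zero]
    set x := Ebar * n with hx
    set y := Ebar * m with hy
    omega
  · -- ε doesn't attempt, greedy attempts
    simp only [Nat.mul_add, Nat.mul_one, Nat.add_zero]
    set x := Ebar * n with hx
    set y := Ebar * m with hy
    omega
  · -- neither
    simp only [Nat.add_zero]
    set x := Ebar * n with hx
    set y := Ebar * m with hy
    omega

lemma batt_le (Bcap B0 : ℕ) (hB0 : B0 ≤ Bcap) (H ε : ℕ → ℕ) (t : ℕ) :
    batt Bcap B0 H ε t ≤ Bcap := by
  cases t with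
  | zero => exact hB0
  | succ t => exact min_le_left _ _

lemma greedyBatt_le (Ebar Bcap B0 : ℕ) (hB0 : B0 ≤ Bcap) (H : ℕ → ℕ) (t : ℕ) :
    greedyBatt Ebar Bcap B0 H t ≤ Bcap := by
  cases t with
  | zero => exact hB0
  | succ t => exact min_le_left _ _

lemma greedy_cond_iff (Ebar Bcap B0 : ℕ) (H : ℕ → ℕ) (t : ℕ) :
    (Ebar ≤ greedyUse Ebar Bcap B0 H t) ↔
      (Ebar ≤ greedyBatt Ebar Bcap B0 H t + H t) := by
  unfold greedyUse
  split_ifs with h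
  · simp [h]
  · constructor
    · intro h0; omega
    · intro h0; exact absurd h0 h

lemma main_invariant (Ebar Bcap B0 : ℕ) (hB0 : B0 ≤ Bcap)
    (H ε : ℕ → ℕ) (hadm : Admissible Bcap B0 H ε) (t : ℕ) :
    batt Bcap B0 H ε t + Ebar * cnt Ebar ε t ≤
      greedyBatt Ebar Bcap B0 H t + Ebar * cnt Ebar (greedyUse Ebar Bcap B0 H) t ∧
    cnt Ebar ε t ≤ cnt Ebar (greedyUse Ebar Bcap B0 H) t := by
  induction t with
  | zero => simp [batt, greedyBatt, cnt]
  | succ t ih =>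
    obtain ⟨ih1, ih2⟩ := ih
    have hstep := step_lemma Ebar Bcap (H t) (batt Bcap B0 H ε t)
      (greedyBatt Ebar Bcap B0 H t) (ε t) (cnt Ebar ε t)
      (cnt Ebar (greedyUse Ebar Bcap B0 H) t)
      (batt_le Bcap B0 hB0 H ε t) (greedyBatt_le Ebar Bcap B0 hB0 H t)
      (hadm t) ih1 ih2
    rw [cnt_succ_s2, cnt_succ_s2]
    show batt Bcap B0 H ε (t+1) + _ ≤ greedyBatt Ebar Bcap B0 H (t+1) + _ ∧ _
    rw [show batt Bcap B0 H ε (t+1) = min Bcap (batt Bcap B0 H ε t + H t - ε t) from rfl,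
      show greedyBatt Ebar Bcap B0 H (t+1) = min Bcap (greedyBatt Ebar Bcap B0 H t + H t -
        (if Ebar ≤ greedyBatt Ebar Bcap B0 H t + H t then Ebar else 0)) from rfl]
    simp only [greedy_cond_iff Ebar Bcap B0 H t]
    exact hstep

/-- Along every sample path, the battery trajectory of any admissible usage sequence,
offset by `Ebar` times its attempt count, is dominated by the corresponding quantity
for the greedy usage sequence:
`B_ε(t+1) + Ē·N^A_ε(t) ≤ B_g(t+1) + Ē·N^A_g(t)`. -/
theorem greedy_battery_attempt_inequality (Ebar Bcap B0 : ℕ) (hB0 : B0 ≤ Bcap)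
    (H ε : ℕ → ℕ) (hadm : Admissible Bcap B0 H ε) (t : ℕ) :
    batt Bcap B0 H ε (t + 1) + Ebar * attempts Ebar ε t ≤
      greedyBatt Ebar Bcap B0 H (t + 1) +
        Ebar * attempts Ebar (greedyUse Ebar Bcap B0 H) t := by
  have h := (main_invariant Ebar Bcap B0 hB0 H ε hadm (t + 1)).1
  simpa [attempts, cnt] using h
end

section
/- (Theorem 1, SDP form.) Let S be a finite nonempty set, A : S → ℝ^{n×n}, p : S × S → ℝ nonnegative, and D > 0 a real constant. Call a real number v feasible if v ≥ −D and there exists R : S → ℝ^{n×n} with every R(s) symmetric positive semidefinite such that for all s ∈ S, (A(s))ᵀ (Σ_{s'∈S} p(s',s) R(s')) A(s) − R(s) ≼ v·I. Then the infimum of the set of feasible v equals −D if and only if there exists a family R : S → ℝ^{n×n} such that for every s ∈ S, R(s) is symmetric positive definite and R(s) − (A(s))ᵀ (Σ_{s'∈S} p(s',s) R(s')) A(s) is positive definite. -/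
open Matrix

section Helpers

variable {n : ℕ}

lemma quad_upper (M : Matrix (Fin n) (Fin n) ℝ) :
    ∃ c : ℝ, 0 ≤ c ∧ ∀ x : Fin n → ℝ, x ⬝ᵥ M *ᵥ x ≤ c * (x ⬝ᵥ x) := by
  refine ⟨∑ i, ∑ j, |M i j|, by positivity, fun x => ?_⟩
  have hxx : ∀ i : Fin n, x i ^ 2 ≤ x ⬝ᵥ x := by
    intro i
    have : x ⬝ᵥ x = ∑ j, x j ^ 2 := by simp [dotProduct, sq]
    rw [this]
    exact Finset.single_le_sum (fun j _ => sq_nonneg (x j)) (Finset.mem_univ i)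
  have key : ∀ i j, x i * M i j * x j ≤ |M i j| * (x ⬝ᵥ x) := by
    intro i j
    have h1 : x i * M i j * x j ≤ |M i j| * (|x i| * |x j|) := by
      calc x i * M i j * x j ≤ |x i * M i j * x j| := le_abs_self _
        _ = |M i j| * (|x i| * |x j|) := by rw [abs_mul, abs_mul]; ring
    have h2 : |x i| * |x j| ≤ x ⬝ᵥ x := by
      nlinarith [hxx i, hxx j, sq_abs (x i), sq_abs (x j), sq_nonneg (|x i| - |x j|)]
    nlinarith [abs_nonneg (M i j)]
  calc x ⬝ᵥ M *ᵥ x = ∑ i, ∑ j, x i * M i j * x j := by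
        simp [dotProduct, mulVec, Finset.mul_sum, mul_assoc]
    _ ≤ ∑ i, ∑ j, |M i j| * (x ⬝ᵥ x) :=
        Finset.sum_le_sum fun i _ => Finset.sum_le_sum fun j _ => key i j
    _ = (∑ i, ∑ j, |M i j|) * (x ⬝ᵥ x) := by rw [Finset.sum_mul]; simp [Finset.sum_mul]

lemma dot_symm {M : Matrix (Fin n) (Fin n) ℝ} (hM : Mᵀ = M)
    (u v : Fin n → ℝ) : u ⬝ᵥ M *ᵥ v = v ⬝ᵥ M *ᵥ u :=
  calc u ⬝ᵥ M *ᵥ v = (u ᵥ* M) ⬝ᵥ v := dotProduct_mulVec u M v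
    _ = v ⬝ᵥ (u ᵥ* M) := dotProduct_comm _ _
    _ = v ⬝ᵥ M *ᵥ u := by rw [← mulVec_transpose, hM]

lemma herm_transpose {M : Matrix (Fin n) (Fin n) ℝ} (hM : M.IsHermitian) :
    Mᵀ = M := by rwa [IsHermitian, conjTranspose_eq_transpose_of_trivial] at hM

lemma herm_smul (r : ℝ) {M : Matrix (Fin n) (Fin n) ℝ} (hM : M.IsHermitian) :
    (r • M).IsHermitian := by
  rw [IsHermitian, conjTranspose_smul, star_trivial, hM.eq]

lemma herm_conj (A : Matrix (Fin n) (Fin n) ℝ) {M : Matrix (Fin n) (Fin n) ℝ}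
    (hM : M.IsHermitian) : (Aᵀ * M * A).IsHermitian := by
  have h : Aᵀ = Aᴴ := (conjTranspose_eq_transpose_of_trivial A).symm
  rw [h]
  exact isHermitian_conjTranspose_mul_mul A hM

lemma psd_quad {M : Matrix (Fin n) (Fin n) ℝ} (h : M.PosSemidef) (x : Fin n → ℝ) :
    0 ≤ x ⬝ᵥ M *ᵥ x := by simpa using h.dotProduct_mulVec_nonneg x

lemma psd_of {M : Matrix (Fin n) (Fin n) ℝ} (h1 : M.IsHermitian)
    (h2 : ∀ x : Fin n → ℝ, 0 ≤ x ⬝ᵥ M *ᵥ x) : M.PosSemidef :=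
  PosSemidef.of_dotProduct_mulVec_nonneg h1 fun x => by simpa using h2 x

lemma pd_of {M : Matrix (Fin n) (Fin n) ℝ} (h1 : M.IsHermitian)
    (h2 : ∀ x : Fin n → ℝ, x ≠ 0 → 0 < x ⬝ᵥ M *ᵥ x) : M.PosDef :=
  PosDef.of_dotProduct_mulVec_pos h1 fun x hx => by simpa using h2 x hx

lemma psd_cs {P : Matrix (Fin n) (Fin n) ℝ} (hP : P.PosSemidef)
    (x y : Fin n → ℝ) : (x ⬝ᵥ P *ᵥ y) ^ 2 ≤ (x ⬝ᵥ P *ᵥ x) * (y ⬝ᵥ P *ᵥ y) := by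
  have hq : ∀ t : ℝ,
      0 ≤ (y ⬝ᵥ P *ᵥ y) * (t * t) + (2 * (x ⬝ᵥ P *ᵥ y)) * t + (x ⬝ᵥ P *ᵥ x) := by
    intro t
    have h0 : 0 ≤ (x + t • y) ⬝ᵥ P *ᵥ (x + t • y) := psd_quad hP _
    have hexp : (x + t • y) ⬝ᵥ P *ᵥ (x + t • y) =
        (y ⬝ᵥ P *ᵥ y) * (t * t) + (2 * (x ⬝ᵥ P *ᵥ y)) * t + (x ⬝ᵥ P *ᵥ x) := by
      rw [mulVec_add, mulVec_smul, add_dotProduct, smul_dotProduct,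
        dotProduct_add, dotProduct_add, dotProduct_smul, dotProduct_smul,
        dot_symm (herm_transpose hP.1) y x]
      simp only [smul_eq_mul]; ring
    rw [hexp] at h0; exact h0
  have hd := discrim_le_zero hq
  rw [discrim] at hd
  nlinarith [hd]

lemma dot_self_nonneg (x : Fin n → ℝ) : 0 ≤ x ⬝ᵥ x := by
  simpa using dotProduct_star_self_nonneg x

lemma dot_self_pos {x : Fin n → ℝ} (hx : x ≠ 0) : 0 < x ⬝ᵥ x :=
  lt_of_le_of_ne (dot_self_nonneg x) fun h => hx (dotProduct_self_eq_zero.mp h.symm)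

lemma quad_lower {P : Matrix (Fin n) (Fin n) ℝ} (hP : P.PosDef) :
    ∃ ε : ℝ, 0 < ε ∧ ∀ x : Fin n → ℝ, ε * (x ⬝ᵥ x) ≤ x ⬝ᵥ P *ᵥ x := by
  obtain ⟨c, hc, hcb⟩ := quad_upper P⁻¹
  refine ⟨1 / (c + 1), by positivity, fun x => ?_⟩
  by_cases hx : x = 0
  · simp [hx]
  have hdet : IsUnit P.det := isUnit_iff_ne_zero.mpr hP.det_pos.ne'
  have hinv : P * P⁻¹ = 1 := mul_nonsing_inv P hdet
  have h1 : x ⬝ᵥ P *ᵥ (P⁻¹ *ᵥ x) = x ⬝ᵥ x := by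
    rw [mulVec_mulVec, hinv, one_mulVec]
  have h2 : (P⁻¹ *ᵥ x) ⬝ᵥ P *ᵥ (P⁻¹ *ᵥ x) = x ⬝ᵥ P⁻¹ *ᵥ x := by
    calc (P⁻¹ *ᵥ x) ⬝ᵥ P *ᵥ (P⁻¹ *ᵥ x) = (P⁻¹ *ᵥ x) ⬝ᵥ x := by
          rw [mulVec_mulVec, hinv, one_mulVec]
      _ = x ⬝ᵥ P⁻¹ *ᵥ x := dotProduct_comm _ _
  have hcs := psd_cs hP.posSemidef x (P⁻¹ *ᵥ x)
  rw [h1, h2] at hcs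
  have hb : x ⬝ᵥ P⁻¹ *ᵥ x ≤ c * (x ⬝ᵥ x) := hcb x
  have hxpos : 0 < x ⬝ᵥ x := dot_self_pos hx
  have hPx : 0 ≤ x ⬝ᵥ P *ᵥ x := psd_quad hP.posSemidef x
  rw [div_mul_eq_mul_div, div_le_iff₀ (by positivity)]
  nlinarith [hcs, hb, hxpos, hPx, hc, mul_le_mul_of_nonneg_left hb hPx]

lemma dot_sub (M N : Matrix (Fin n) (Fin n) ℝ) (x : Fin n → ℝ) :
    x ⬝ᵥ (M - N) *ᵥ x = x ⬝ᵥ M *ᵥ x - x ⬝ᵥ N *ᵥ x := by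
  rw [sub_mulVec, dotProduct_sub]

lemma dot_add (M N : Matrix (Fin n) (Fin n) ℝ) (x : Fin n → ℝ) :
    x ⬝ᵥ (M + N) *ᵥ x = x ⬝ᵥ M *ᵥ x + x ⬝ᵥ N *ᵥ x := by
  rw [add_mulVec, dotProduct_add]

lemma dot_smulM (r : ℝ) (M : Matrix (Fin n) (Fin n) ℝ) (x : Fin n → ℝ) :
    x ⬝ᵥ (r • M) *ᵥ x = r * (x ⬝ᵥ M *ᵥ x) := by
  rw [smul_mulVec, dotProduct_smul, smul_eq_mul]

lemma dot_oneM (x : Fin n → ℝ) :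
    x ⬝ᵥ (1 : Matrix (Fin n) (Fin n) ℝ) *ᵥ x = x ⬝ᵥ x := by rw [one_mulVec]

end Helpers

/-- Theorem 1 (SDP form): the infimum of the feasible values `v ≥ -D` of the
semidefinite program with constraints `Aᵀ(Σ_{s'} p(s',s) R(s'))A - R(s) ≼ v·I`,
`R(s) ≽ 0`, equals `-D` if and only if the strict coupled Lyapunov inequalities
admit a positive definite solution, i.e., the Markov jump linear system with mode
matrices `A s` and transition probabilities `p s' s` is mean-square stable. -/
theorem sdp_stability_test (n : ℕ) (S : Type*) [Fintype S] [Nonempty S]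
    (A : S → Matrix (Fin n) (Fin n) ℝ) (p : S → S → ℝ) (hp : ∀ s' s, 0 ≤ p s' s)
    (D : ℝ) (hD : 0 < D) :
    sInf {v : ℝ | -D ≤ v ∧ ∃ R : S → Matrix (Fin n) (Fin n) ℝ,
        (∀ s : S, (R s).PosSemidef) ∧ ∀ s : S,
          (v • (1 : Matrix (Fin n) (Fin n) ℝ) -
            ((A s)ᵀ * (∑ s' : S, p s' s • R s') * A s - R s)).PosSemidef} = -D ↔
    (∃ R : S → Matrix (Fin n) (Fin n) ℝ, ∀ s : S, (R s).PosDef ∧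
        (R s - (A s)ᵀ * (∑ s' : S, p s' s • R s') * A s).PosDef) := by
  set F : Set ℝ := {v : ℝ | -D ≤ v ∧ ∃ R : S → Matrix (Fin n) (Fin n) ℝ,
        (∀ s : S, (R s).PosSemidef) ∧ ∀ s : S,
          (v • (1 : Matrix (Fin n) (Fin n) ℝ) -
            ((A s)ᵀ * (∑ s' : S, p s' s • R s') * A s - R s)).PosSemidef} with hF
  have hbdd : ∀ v ∈ F, -D ≤ v := fun v hv => hv.1
  constructor
  · -- forward direction
    intro h
    -- F is nonempty: 0 ∈ F via R = 0
    have h0F : (0 : ℝ) ∈ F := by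
      refine ⟨by linarith, fun _ => 0, fun s => Matrix.PosSemidef.zero, fun s => ?_⟩
      simp only [smul_zero, Finset.sum_const_zero, Matrix.mul_zero, Matrix.zero_mul,
        sub_zero, zero_smul, zero_sub, neg_zero]
      exact Matrix.PosSemidef.zero
    have hne : F.Nonempty := ⟨0, h0F⟩
    obtain ⟨v, hvF, hvlt⟩ := exists_lt_of_csInf_lt hne (by rw [h]; linarith : sInf F < -D/2)
    obtain ⟨hvD, R, hRpsd, hcon⟩ := hvF
    have hv0 : v < 0 := by linarith
    choose c hc hcb using fun s => quad_upper ((A s)ᵀ * A s)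
    set q : S → ℝ := fun s => ∑ s' : S, p s' s with hq
    have hq0 : ∀ s, 0 ≤ q s := fun s => Finset.sum_nonneg fun s' _ => hp s' s
    set K : ℝ := Finset.univ.sup' Finset.univ_nonempty (fun s => q s * c s) with hK
    have hK0 : 0 ≤ K := by
      obtain ⟨s0⟩ := ‹Nonempty S›
      have := Finset.le_sup' (fun s => q s * c s) (Finset.mem_univ s0)
      have h0 := mul_nonneg (hq0 s0) (hc s0)
      rw [hK]; exact le_trans h0 this
    set δ : ℝ := (-v) / (K + 1) with hδ
    have hδ0 : 0 < δ := div_pos (by linarith) (by linarith)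
    have hδK : ∀ s, δ * (q s * c s) ≤ -v := by
      intro s
      have h1 : q s * c s ≤ K := hK ▸ Finset.le_sup' (fun s => q s * c s) (Finset.mem_univ s)
      have h2 : δ * (K + 1) = -v := by rw [hδ, div_mul_cancel₀]; linarith
      nlinarith
    refine ⟨fun s => R s + δ • 1, fun s => ⟨?_, ?_⟩⟩
    · -- R s + δ • 1 PosDef
      refine pd_of ((hRpsd s).1.add (herm_smul δ Matrix.isHermitian_one)) fun x hx => ?_
      rw [dot_add, dot_smulM, dot_oneM]
      have := psd_quad (hRpsd s) x
      nlinarith [dot_self_pos hx]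
    · -- strict Lyapunov inequality
      set M : Matrix (Fin n) (Fin n) ℝ := ∑ s' : S, p s' s • R s' with hM
      have hMherm : M.IsHermitian := by
        rw [hM, Matrix.IsHermitian]
        rw [Matrix.conjTranspose_sum]
        exact Finset.sum_congr rfl fun s' _ => (herm_smul (p s' s) (hRpsd s').1).eq
      have hsum : (∑ s' : S, p s' s • (R s' + δ • 1)) = M + (q s * δ) • 1 := by
        rw [hM]
        calc ∑ s' : S, p s' s • (R s' + δ • (1 : Matrix (Fin n) (Fin n) ℝ))
            = ∑ s' : S, (p s' s • R s' + (p s' s * δ) • (1 : Matrix (Fin n) (Fin n) ℝ)) := by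
              refine Finset.sum_congr rfl fun s' _ => ?_
              rw [smul_add, smul_smul]
          _ = (∑ s' : S, p s' s • R s') +
              (∑ s' : S, (p s' s * δ) • (1 : Matrix (Fin n) (Fin n) ℝ)) :=
              Finset.sum_add_distrib
          _ = (∑ s' : S, p s' s • R s') + (q s * δ) • (1 : Matrix (Fin n) (Fin n) ℝ) := by
              rw [← Finset.sum_smul, ← Finset.sum_mul, hq]
      rw [hsum]
      have hexp : (A s)ᵀ * (M + (q s * δ) • 1) * A s
          = (A s)ᵀ * M * A s + (q s * δ) • ((A s)ᵀ * A s) := by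
        rw [Matrix.mul_add, Matrix.add_mul, Matrix.mul_smul, Matrix.mul_one, Matrix.smul_mul]
      rw [hexp]
      have hGherm : (R s + δ • 1 - ((A s)ᵀ * M * A s + (q s * δ) • ((A s)ᵀ * A s))).IsHermitian :=
        ((hRpsd s).1.add (herm_smul δ Matrix.isHermitian_one)).sub
          ((herm_conj (A s) hMherm).add
            (herm_smul _ (by simpa using herm_conj (A s) Matrix.isHermitian_one)))
      refine pd_of hGherm fun x hx => ?_
      rw [dot_sub, dot_add, dot_add, dot_smulM, dot_smulM, dot_oneM]
      -- constraint from v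
      have hcx : 0 ≤ x ⬝ᵥ (v • (1 : Matrix (Fin n) (Fin n) ℝ) -
          ((A s)ᵀ * M * A s - R s)) *ᵥ x := psd_quad (hcon s) x
      rw [dot_sub, dot_sub, dot_smulM, dot_oneM] at hcx
      have hAx : x ⬝ᵥ ((A s)ᵀ * A s) *ᵥ x ≤ c s * (x ⬝ᵥ x) := hcb s x
      have hxp : 0 < x ⬝ᵥ x := dot_self_pos hx
      have hδqc : δ * (q s * c s) ≤ -v := hδK s
      nlinarith [mul_nonneg (mul_nonneg (hq0 s) hδ0.le) (sub_nonneg.mpr hAx),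
        mul_nonneg (mul_nonneg (hq0 s) (hc s)) hxp.le]
  · -- backward direction
    rintro ⟨R, hR⟩
    choose ε hε hbound using fun s => quad_lower (hR s).2
    set ε0 : ℝ := Finset.univ.inf' Finset.univ_nonempty ε with hε0def
    have hε0 : 0 < ε0 := by
      obtain ⟨s0, _, hs0⟩ := Finset.exists_mem_eq_inf' Finset.univ_nonempty ε
      rw [hε0def, hs0]; exact hε s0
    set t : ℝ := D / ε0 with ht
    have ht0 : 0 < t := by positivity
    have htε : ∀ s, D ≤ t * ε s := by
      intro s
      have h1 : ε0 ≤ ε s := Finset.inf'_le _ (Finset.mem_univ s)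
      have h2 : t * ε0 = D := by rw [ht, div_mul_cancel₀]; exact hε0.ne'
      nlinarith
    have hmem : -D ∈ F := by
      refine ⟨le_refl _, fun s => t • R s, fun s => ?_, fun s => ?_⟩
      · refine psd_of (herm_smul t (hR s).1.1) fun x => ?_
        rw [dot_smulM]
        exact mul_nonneg ht0.le (psd_quad (hR s).1.posSemidef x)
      · set M : Matrix (Fin n) (Fin n) ℝ := ∑ s' : S, p s' s • R s' with hM
        have hsum : (∑ s' : S, p s' s • (t • R s')) = t • M := by
          rw [hM, Finset.smul_sum]
          exact Finset.sum_congr rfl fun s' _ => smul_comm _ _ _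
        rw [hsum]
        have hexp : (A s)ᵀ * (t • M) * A s = t • ((A s)ᵀ * M * A s) := by
          rw [Matrix.mul_smul, Matrix.smul_mul]
        rw [hexp]
        have hMherm : M.IsHermitian := by
          rw [hM, Matrix.IsHermitian, Matrix.conjTranspose_sum]
          exact Finset.sum_congr rfl fun s' _ => (herm_smul (p s' s) (hR s').1.1).eq
        have hherm : ((-D) • (1 : Matrix (Fin n) (Fin n) ℝ) -
            (t • ((A s)ᵀ * M * A s) - t • R s)).IsHermitian :=
          (herm_smul _ Matrix.isHermitian_one).sub
            ((herm_smul t (herm_conj (A s) hMherm)).sub (herm_smul t (hR s).1.1))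
        refine psd_of hherm fun x => ?_
        rw [dot_sub, dot_sub, dot_smulM, dot_smulM, dot_smulM, dot_oneM]
        have hb := hbound s x
        have hP : x ⬝ᵥ (R s - (A s)ᵀ * M * A s) *ᵥ x
            = x ⬝ᵥ (R s) *ᵥ x - x ⬝ᵥ ((A s)ᵀ * M * A s) *ᵥ x := dot_sub _ _ x
        rw [hP] at hb
        have hxs := dot_self_nonneg x
        have := htε s
        nlinarith [mul_le_mul_of_nonneg_left hb ht0.le,
          mul_le_mul_of_nonneg_right (htε s) hxs]
    exact le_antisymm (csInf_le ⟨-D, hbdd⟩ hmem) (le_csInf ⟨-D, hmem⟩ hbdd)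
end
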